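/- arXiv:1805.08007 — 5 statements merged into one kernel-verified Lean document; each statement's English description precedes it below -/
import Mathlib

section
/- If z ∈ F* (i.e., z ≠ 0, -1/2 ≤ Re(z), Im(z) < 1/2), then the nearest Gaussian integer a = [1/z] satisfies |a| ≥ √2; in particular a ∉ {0, 1, -1, i, -i}. -/
open Complex Filter

/-- `z` is a Gaussian integer (as a complex number). -/
def IsGaussianInt (z : ℂ) : Prop := ∃ m n : ℤ, z = (m : ℂ) + (n : ℂ) * I

/-- `z` belongs to `ℚ(i)`. -/
def IsGaussianRational (z : ℂ) : Prop :=
  ∃ p q : ℂ, IsGaussianInt p ∧ IsGaussianInt q ∧ q ≠ 0 ∧ z = p / q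

/-- The fundamental domain `𝔉`. -/
def InFund (z : ℂ) : Prop :=
  -(1/2) ≤ z.re ∧ z.re < 1/2 ∧ -(1/2) ≤ z.im ∧ z.im < 1/2

/-- Nearest Gaussian integer. -/
noncomputable def nearGauss (z : ℂ) : ℂ :=
  (⌊z.re + 1/2⌋ : ℤ) + (⌊z.im + 1/2⌋ : ℤ) * I

/-- Complete quotients of the Hurwitz continued fraction of `z`. -/
noncomputable def hcfZ (z : ℂ) : ℕ → ℂ
  | 0 => z
  | n + 1 => 1 / (hcfZ z n - nearGauss (hcfZ z n))

/-- Partial quotients of the Hurwitz continued fraction of `z`. -/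
noncomputable def hcfA (z : ℂ) (n : ℕ) : ℂ := nearGauss (hcfZ z n)

/-- Numerators: `hcfP z (n+2) = p n`, with `p (-2) = 0`, `p (-1) = 1`. -/
noncomputable def hcfP (z : ℂ) : ℕ → ℂ
  | 0 => 0
  | 1 => 1
  | n + 2 => hcfA z n * hcfP z (n + 1) + hcfP z n

/-- Denominators: `hcfQ z (n+2) = q n`, with `q (-2) = 1`, `q (-1) = 0`. -/
noncomputable def hcfQ (z : ℂ) : ℕ → ℂ
  | 0 => 1
  | 1 => 0
  | n + 2 => hcfA z n * hcfQ z (n + 1) + hcfQ z n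
set_option maxHeartbeats 1000000 in
/-- for `z ∈ 𝔉*`, the nearest Gaussian integer `a = [1/z]` has `|a| ≥ √2`;
in particular `a ∉ {0, 1, -1, i, -i}`. -/
theorem nearGauss_inv_ge_sqrt_two (z : ℂ) (hz : InFund z) (hz0 : z ≠ 0) :
    Real.sqrt 2 ≤ ‖nearGauss (1 / z)‖ ∧
      nearGauss (1 / z) ∉ ({0, 1, -1, I, -I} : Set ℂ) := by
  obtain ⟨h1, h2, h3, h4⟩ := hz
  set w : ℂ := 1 / z with hw
  have hw0 : w ≠ 0 := one_div_ne_zero hz0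
  have hzw : z = w⁻¹ := by
    rw [hw]; field_simp
  set u : ℝ := w.re
  set v : ℝ := w.im
  have hNpos : 0 < u * u + v * v := by
    have := Complex.normSq_pos.mpr hw0
    rwa [Complex.normSq_apply] at this
  have hzre : z.re = u / (u * u + v * v) := by
    rw [hzw, Complex.inv_re, Complex.normSq_apply]
  have hzim : z.im = -v / (u * u + v * v) := by
    rw [hzw, Complex.inv_im, Complex.normSq_apply, neg_div]
  rw [hzre] at h1 h2
  rw [hzim] at h3 h4
  have hA : -(1/2) * (u * u + v * v) ≤ u := by
    have := (le_div_iff₀ hNpos).mp h1; linarith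
  have hB : u < 1/2 * (u * u + v * v) := by
    have := (div_lt_iff₀ hNpos).mp h2; linarith
  have hC : -(1/2) * (u * u + v * v) ≤ -v := by
    have := (le_div_iff₀ hNpos).mp h3; linarith
  have hD : -v < 1/2 * (u * u + v * v) := by
    have := (div_lt_iff₀ hNpos).mp h4; linarith
  set m : ℤ := ⌊w.re + 1/2⌋ with hm
  set n : ℤ := ⌊w.im + 1/2⌋ with hn
  have hu1 : (m : ℝ) ≤ u + 1/2 := Int.floor_le _
  have hu2 : u + 1/2 < (m : ℝ) + 1 := Int.lt_floor_add_one _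
  have hv1 : (n : ℝ) ≤ v + 1/2 := Int.floor_le _
  have hv2 : v + 1/2 < (n : ℝ) + 1 := Int.lt_floor_add_one _
  have hsqu : (u - (m:ℝ))^2 ≤ 1/4 := by nlinarith
  have hsqv : (v - (n:ℝ))^2 ≤ 1/4 := by nlinarith
  have hPu : 0 ≤ (1/2*(u*u+v*v) - u) * (1/2*(u*u+v*v) + u) :=
    mul_nonneg (by linarith) (by linarith)
  have hPv : 0 ≤ (1/2*(u*u+v*v) + v) * (1/2*(u*u+v*v) - v) :=
    mul_nonneg (by linarith) (by linarith)
  have hmn : 2 ≤ m ^ 2 + n ^ 2 := by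
    by_contra hcon
    push_neg at hcon
    have hm1 : -1 ≤ m ∧ m ≤ 1 := by constructor <;> nlinarith [sq_nonneg n, sq_nonneg (m+1), sq_nonneg (m-1)]
    have hn1 : -1 ≤ n ∧ n ≤ 1 := by constructor <;> nlinarith [sq_nonneg m, sq_nonneg (n+1), sq_nonneg (n-1)]
    obtain ⟨hma, hmb⟩ := hm1
    obtain ⟨hna, hnb⟩ := hn1
    interval_cases m <;> interval_cases n <;> push_cast at hsqu hsqv <;> first
      | omega
      | nlinarith [hsqu, hsqv, hA, hB, hC, hD]
      | nlinarith [hsqu, hsqv, hPu, hPv, hNpos]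
  have ha : nearGauss w = (m : ℂ) + (n : ℂ) * I := rfl
  have habs2 : ‖nearGauss w‖ ^ 2 = (m : ℝ) ^ 2 + (n : ℝ) ^ 2 := by
    rw [ha, Complex.sq_norm]
    have : ((m : ℂ) + (n : ℂ) * I) = ((m : ℝ) : ℂ) + ((n : ℝ) : ℂ) * I := by push_cast; ring
    rw [this, Complex.normSq_add_mul_I]
  have hmnR : (2 : ℝ) ≤ (m : ℝ) ^ 2 + (n : ℝ) ^ 2 := by exact_mod_cast (by exact_mod_cast hmn : (2:ℤ) ≤ m ^2 + n ^2)
  have hfirst : Real.sqrt 2 ≤ ‖nearGauss w‖ := by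
    have h2le : (2 : ℝ) ≤ ‖nearGauss w‖ ^ 2 := by rw [habs2]; exact hmnR
    calc Real.sqrt 2 ≤ Real.sqrt (‖nearGauss w‖ ^ 2) := Real.sqrt_le_sqrt h2le
      _ = ‖nearGauss w‖ := by
          rw [Real.sqrt_sq (norm_nonneg _)]
  refine ⟨hfirst, ?_⟩
  intro hmem
  have hone : (1 : ℝ) < Real.sqrt 2 := by
    nlinarith [Real.sq_sqrt (by norm_num : (0:ℝ) ≤ 2), Real.sqrt_nonneg 2]
  simp only [Set.mem_insert_iff, Set.mem_singleton_iff] at hmem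
  rcases hmem with h | h | h | h | h <;>
    rw [h] at hfirst <;>
    simp [Complex.norm_I] at hfirst <;> linarith
end

section
/- Let z ∈ ℂ \ ℚ(i) have Hurwitz continued fraction with Q-pair (p_n), (q_n). Then the sequence of absolute values (|q_n|)_{n≥0} is strictly increasing. -/
open Complex Filter

namespace HurwitzAux

open Complex

/-! ### Gaussian integer basics -/

lemma gi_re_im {g : ℂ} (hg : IsGaussianInt g) :
    ∃ m n : ℤ, g.re = (m:ℝ) ∧ g.im = (n:ℝ) := by
  obtain ⟨m, n, rfl⟩ := hg
  exact ⟨m, n, by simp, by simp⟩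

lemma gi_of_re_im {g : ℂ} (m n : ℤ) (h1 : g.re = (m:ℝ)) (h2 : g.im = (n:ℝ)) :
    IsGaussianInt g := by
  refine ⟨m, n, ?_⟩
  apply Complex.ext <;> simp [h1, h2]

lemma gi_add {a b : ℂ} (ha : IsGaussianInt a) (hb : IsGaussianInt b) :
    IsGaussianInt (a + b) := by
  obtain ⟨m, n, hm, hn⟩ := gi_re_im ha
  obtain ⟨p, q, hp, hq⟩ := gi_re_im hb
  exact gi_of_re_im (m + p) (n + q) (by simp [hm, hp]) (by simp [hn, hq])

lemma gi_mul {a b : ℂ} (ha : IsGaussianInt a) (hb : IsGaussianInt b) :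
    IsGaussianInt (a * b) := by
  obtain ⟨m, n, hm, hn⟩ := gi_re_im ha
  obtain ⟨p, q, hp, hq⟩ := gi_re_im hb
  refine gi_of_re_im (m * p - n * q) (m * q + n * p) ?_ ?_
  · simp [Complex.mul_re, hm, hn, hp, hq]
  · simp [Complex.mul_im, hm, hn, hp, hq]

lemma gi_conj {a : ℂ} (ha : IsGaussianInt a) : IsGaussianInt (starRingEnd ℂ a) := by
  obtain ⟨m, n, hm, hn⟩ := gi_re_im ha
  exact gi_of_re_im m (-n) (by simp [hm]) (by simp [hn])

lemma gi_one : IsGaussianInt 1 := gi_of_re_im 1 0 (by simp) (by simp)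

lemma gi_nearGauss (y : ℂ) : IsGaussianInt (nearGauss y) :=
  ⟨_, _, rfl⟩

lemma int_sq_cases (m : ℤ) : m^2 = 0 ∨ m^2 = 1 ∨ 4 ≤ m^2 := by
  rcases le_or_gt 2 m with h | h
  · right; right; nlinarith
  rcases le_or_gt m (-2) with h' | h'
  · right; right; nlinarith
  interval_cases m <;> simp

lemma gi_normSq_int {g : ℂ} (hg : IsGaussianInt g) :
    ∃ m n : ℤ, g.re = (m:ℝ) ∧ g.im = (n:ℝ) ∧ normSq g = ((m^2 + n^2 : ℤ) : ℝ) := by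
  obtain ⟨m, n, hm, hn⟩ := gi_re_im hg
  refine ⟨m, n, hm, hn, ?_⟩
  rw [Complex.normSq_apply, hm, hn]
  push_cast
  ring

lemma gi_normSq_cases {g : ℂ} (hg : IsGaussianInt g) :
    normSq g = 0 ∨ normSq g = 1 ∨ normSq g = 2 ∨ 4 ≤ normSq g := by
  obtain ⟨m, n, _, _, hs⟩ := gi_normSq_int hg
  have h1 := int_sq_cases m
  have h2 := int_sq_cases n
  have h3 : (0:ℤ) ≤ m^2 := sq_nonneg m
  have h4 : (0:ℤ) ≤ n^2 := sq_nonneg n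
  have : m^2 + n^2 = 0 ∨ m^2 + n^2 = 1 ∨ m^2 + n^2 = 2 ∨ 4 ≤ m^2 + n^2 := by omega
  rcases this with h | h | h | h
  · left; rw [hs, h]; norm_num
  · right; left; rw [hs, h]; norm_num
  · right; right; left; rw [hs, h]; norm_num
  · right; right; right; rw [hs]; exact_mod_cast h

lemma gi_normSq_one {g : ℂ} (hg : IsGaussianInt g) (h : normSq g = 1) :
    g = 1 ∨ g = -1 ∨ g = I ∨ g = -I := by
  obtain ⟨m, n, hm, hn, hs⟩ := gi_normSq_int hg
  have hint : m^2 + n^2 = 1 := by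
    have : ((m^2 + n^2 : ℤ) : ℝ) = 1 := by rw [← hs, h]
    exact_mod_cast this
  have h1 := int_sq_cases m
  have h2 := int_sq_cases n
  have h3 : (0:ℤ) ≤ m^2 := sq_nonneg m
  have h4 : (0:ℤ) ≤ n^2 := sq_nonneg n
  have hcase : (m^2 = 1 ∧ n = 0) ∨ (m = 0 ∧ n^2 = 1) := by
    rcases h1 with a | a | a <;> rcases h2 with b | b | b <;>
      first
        | (left; constructor; omega; nlinarith)
        | (right; constructor; nlinarith; omega)
        | omega
  have hext : ∀ x : ℂ, g.re = x.re → g.im = x.im → g = x := fun x hr hi =>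
    Complex.ext hr hi
  rcases hcase with ⟨hm2, hn0⟩ | ⟨hm0, hn2⟩
  · have : m = 1 ∨ m = -1 := by
      have : (m - 1) * (m + 1) = 0 := by ring_nf; omega
      rcases mul_eq_zero.mp this with h | h
      · left; omega
      · right; omega
    rcases this with rfl | rfl
    · left; apply hext <;> simp [hm, hn, hn0]
    · right; left; apply hext <;> simp [hm, hn, hn0]
  · have : n = 1 ∨ n = -1 := by
      have : (n - 1) * (n + 1) = 0 := by ring_nf; omega
      rcases mul_eq_zero.mp this with h | h
      · left; omega
      · right; omega
    rcases this with rfl | rfl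
    · right; right; left; apply hext <;> simp [hm, hn, hm0]
    · right; right; right; apply hext <;> simp [hm, hn, hm0]

/-! ### Gaussian rationality -/

lemma gr_of_gi {g : ℂ} (hg : IsGaussianInt g) : IsGaussianRational g :=
  ⟨g, 1, hg, gi_one, one_ne_zero, by simp⟩

lemma gr_add_gi {x g : ℂ} (hx : IsGaussianRational x) (hg : IsGaussianInt g) :
    IsGaussianRational (x + g) := by
  obtain ⟨p, q, hp, hq, hq0, rfl⟩ := hx
  exact ⟨p + g * q, q, gi_add hp (gi_mul hg hq), hq, hq0, by field_simp⟩

lemma gr_inv {x : ℂ} (hx : IsGaussianRational x) (hx0 : x ≠ 0) :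
    IsGaussianRational x⁻¹ := by
  obtain ⟨p, q, hp, hq, hq0, rfl⟩ := hx
  have hp0 : p ≠ 0 := by
    intro h; apply hx0; simp [h]
  exact ⟨q, p, hq, hp, hp0, by field_simp⟩

/-! ### The fractional parts -/

noncomputable def wseq (z : ℂ) (n : ℕ) : ℂ := hcfZ z n - nearGauss (hcfZ z n)

lemma hcfZ_succ (z : ℂ) (n : ℕ) : hcfZ z (n + 1) = (wseq z n)⁻¹ := by
  rw [wseq]
  show 1 / _ = _
  rw [one_div]

lemma wseq_re_bounds (z : ℂ) (n : ℕ) :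
    -(1/2) ≤ (wseq z n).re ∧ (wseq z n).re ≤ 1/2 ∧
    -(1/2) ≤ (wseq z n).im ∧ (wseq z n).im ≤ 1/2 := by
  set y := hcfZ z n
  have hre : (wseq z n).re = y.re - (⌊y.re + 1/2⌋ : ℤ) := by
    simp [wseq, nearGauss, hcfA]; rfl
  have him : (wseq z n).im = y.im - (⌊y.im + 1/2⌋ : ℤ) := by
    simp [wseq, nearGauss, hcfA]; rfl
  have h1 := Int.floor_le (y.re + 1/2)
  have h2 := Int.lt_floor_add_one (y.re + 1/2)
  have h3 := Int.floor_le (y.im + 1/2)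
  have h4 := Int.lt_floor_add_one (y.im + 1/2)
  constructor
  · rw [hre]; linarith
  refine ⟨by rw [hre]; linarith, by rw [him]; linarith, by rw [him]; linarith⟩

lemma wseq_normSq_le (z : ℂ) (n : ℕ) : normSq (wseq z n) ≤ 1/2 := by
  obtain ⟨h1, h2, h3, h4⟩ := wseq_re_bounds z n
  rw [Complex.normSq_apply]
  nlinarith

/-! ### Irrationality propagation -/

lemma not_gr_hcfZ {z : ℂ} (hz : ¬ IsGaussianRational z) (n : ℕ) :
    ¬ IsGaussianRational (hcfZ z n) := by
  induction n with
  | zero => exact hz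
  | succ n ih =>
    intro h
    have hw0 : wseq z n ≠ 0 := by
      intro h0
      apply ih
      have : hcfZ z n = nearGauss (hcfZ z n) := by
        have := sub_eq_zero.mp h0
        exact this
      rw [this]
      exact gr_of_gi (gi_nearGauss _)
    rw [hcfZ_succ] at h
    apply ih
    have hinv : IsGaussianRational (wseq z n) := by
      have := gr_inv h (inv_ne_zero hw0)
      rwa [inv_inv] at this
    have : hcfZ z n = wseq z n + nearGauss (hcfZ z n) := by
      rw [wseq]; ring
    rw [this]
    exact gr_add_gi hinv (gi_nearGauss _)

lemma wseq_ne_zero {z : ℂ} (hz : ¬ IsGaussianRational z) (n : ℕ) : wseq z n ≠ 0 := by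
  intro h0
  apply not_gr_hcfZ hz n
  have : hcfZ z n = nearGauss (hcfZ z n) := sub_eq_zero.mp h0
  rw [this]
  exact gr_of_gi (gi_nearGauss _)

/-! ### The key algebraic identity -/

lemma key_ident (g s : ℂ) :
    normSq (1 + g * s) - normSq s =
      normSq (s + starRingEnd ℂ g) - 1 + (normSq g - 2) * (normSq s - 1) := by
  simp only [Complex.normSq_apply, Complex.add_re, Complex.add_im, Complex.mul_re,
    Complex.mul_im, Complex.one_re, Complex.one_im, Complex.conj_re, Complex.conj_im]
  ring

/-- If `s ≠ 0`, `|g|² = 2` and `|s + conj g| > 1` then `|g + s⁻¹| > 1`. -/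
lemma step_two {g s : ℂ} (hs : s ≠ 0) (hg : normSq g = 2)
    (h : 1 < normSq (s + starRingEnd ℂ g)) : 1 < normSq (g + s⁻¹) := by
  have hN : 0 < normSq s := Complex.normSq_pos.mpr hs
  have hfac : g + s⁻¹ = (1 + g * s) * s⁻¹ := by field_simp; ring
  have hmul : normSq (g + s⁻¹) = normSq (1 + g * s) / normSq s := by
    rw [hfac, Complex.normSq_mul, Complex.normSq_inv]
    rw [div_eq_mul_inv]
  rw [hmul]
  rw [lt_div_iff₀ hN]
  have := key_ident g s
  rw [hg] at this
  nlinarith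

/-- If `w ≠ 0`, `|c|² = 2` and `|w⁻¹ - c| < 1` then `|w - conj c| < 1`. -/
lemma step_two' {c w : ℂ} (hw : w ≠ 0) (hc : normSq c = 2)
    (h : normSq (w⁻¹ - c) < 1) : normSq (w - starRingEnd ℂ c) < 1 := by
  have hN : 0 < normSq w := Complex.normSq_pos.mpr hw
  have hfac : w⁻¹ - c = (1 + (-c) * w) * w⁻¹ := by field_simp; ring
  have hmul : normSq (w⁻¹ - c) = normSq (1 + (-c) * w) / normSq w := by
    rw [hfac, Complex.normSq_mul, Complex.normSq_inv, div_eq_mul_inv]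
  rw [hmul, div_lt_iff₀ hN, one_mul] at h
  have hid := key_ident (-c) w
  have hc' : normSq (-c) = 2 := by rwa [Complex.normSq_neg]
  rw [hc'] at hid
  have : w + starRingEnd ℂ (-c) = w - starRingEnd ℂ c := by
    rw [map_neg]; ring
  rw [this] at hid
  nlinarith

/-! ### Delta facts : `z_{n+1}` avoids the four unit disks and the disk of radius √2 -/

lemma inv_normSq_facts {v : ℂ} (hv : v ≠ 0)
    (h1 : -(1/2) ≤ v.re) (h2 : v.re ≤ 1/2) (h3 : -(1/2) ≤ v.im) (h4 : v.im ≤ 1/2) :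
    2 ≤ normSq v⁻¹ ∧ 1 ≤ normSq (v⁻¹ - 1) ∧ 1 ≤ normSq (v⁻¹ + 1) ∧
      1 ≤ normSq (v⁻¹ - I) ∧ 1 ≤ normSq (v⁻¹ + I) := by
  have hN : 0 < normSq v := Complex.normSq_pos.mpr hv
  have hNle : normSq v ≤ 1/2 := by rw [Complex.normSq_apply]; nlinarith
  have hinv : normSq v⁻¹ = (normSq v)⁻¹ := Complex.normSq_inv v
  constructor
  · rw [hinv]
    rw [le_inv_comm₀] <;> nlinarith
  have key : ∀ u : ℂ, normSq v ≤ normSq (1 - u * v) → 1 ≤ normSq (v⁻¹ - u) := by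
    intro u hu
    have hfac : v⁻¹ - u = (1 - u * v) * v⁻¹ := by field_simp
    have : normSq (v⁻¹ - u) = normSq (1 - u * v) / normSq v := by
      rw [hfac, Complex.normSq_mul, Complex.normSq_inv, div_eq_mul_inv]
    rw [this, le_div_iff₀ hN, one_mul]
    exact hu
  refine ⟨key 1 ?_, ?_, key I ?_, ?_⟩
  · simp only [Complex.normSq_apply, Complex.sub_re, Complex.sub_im, Complex.one_re,
      Complex.one_im, Complex.mul_re, Complex.mul_im]
    nlinarith
  · have := key (-1) ?_
    · rwa [sub_neg_eq_add] at this
    simp only [Complex.normSq_apply, Complex.sub_re, Complex.sub_im, Complex.one_re,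
      Complex.one_im, Complex.mul_re, Complex.mul_im, Complex.neg_re, Complex.neg_im]
    nlinarith
  · simp only [Complex.normSq_apply, Complex.sub_re, Complex.sub_im, Complex.one_re,
      Complex.one_im, Complex.mul_re, Complex.mul_im, Complex.I_re, Complex.I_im]
    nlinarith
  · have := key (-I) ?_
    · rwa [sub_neg_eq_add] at this
    simp only [Complex.normSq_apply, Complex.sub_re, Complex.sub_im, Complex.one_re,
      Complex.one_im, Complex.mul_re, Complex.mul_im, Complex.neg_re, Complex.neg_im,
      Complex.I_re, Complex.I_im]
    nlinarith

lemma delta_facts {z : ℂ} (hz : ¬ IsGaussianRational z) (n : ℕ) :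
    2 ≤ normSq (hcfZ z (n+1)) ∧ 1 ≤ normSq (hcfZ z (n+1) - 1) ∧
      1 ≤ normSq (hcfZ z (n+1) + 1) ∧ 1 ≤ normSq (hcfZ z (n+1) - I) ∧
      1 ≤ normSq (hcfZ z (n+1) + I) := by
  obtain ⟨h1, h2, h3, h4⟩ := wseq_re_bounds z n
  rw [hcfZ_succ]
  exact inv_normSq_facts (wseq_ne_zero hz n) h1 h2 h3 h4
/-! ### The partial quotients have norm ≥ 2 -/

lemma hcfA_two_or_four {z : ℂ} (hz : ¬ IsGaussianRational z) (n : ℕ) :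
    normSq (hcfA z (n+1)) = 2 ∨ 4 ≤ normSq (hcfA z (n+1)) := by
  have hbox : normSq (hcfZ z (n+1) - hcfA z (n+1)) ≤ 1/2 := by
    have := wseq_normSq_le z (n+1)
    rw [wseq] at this
    rw [hcfA]
    exact this
  obtain ⟨hd0, hd1, hd2, hd3, hd4⟩ := delta_facts hz n
  have hgi : IsGaussianInt (hcfA z (n+1)) := gi_nearGauss _
  rcases gi_normSq_cases hgi with h | h | h | h
  · exfalso
    have h0 : hcfA z (n+1) = 0 := Complex.normSq_eq_zero.mp h
    rw [h0, sub_zero] at hbox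
    linarith
  · exfalso
    rcases gi_normSq_one hgi h with h' | h' | h' | h' <;> rw [h'] at hbox
    · linarith
    · rw [sub_neg_eq_add] at hbox; linarith
    · linarith
    · rw [sub_neg_eq_add] at hbox; linarith
  · exact Or.inl h
  · exact Or.inr h

/-! ### The invariant sets `Gd` -/

def Gd (z : ℂ) : ℕ → ℂ → Prop
  | 0, _ => True
  | k+1, x => 4 ≤ normSq (hcfA z (k+1) + x) ∨
      (normSq (hcfA z (k+1) + x) = 2 ∧ Gd z k (starRingEnd ℂ (hcfA z (k+1) + x)))

/-! ### The admissibility lemma -/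

lemma mainZ {z : ℂ} (hz : ¬ IsGaussianRational z) :
    ∀ k, ∀ c : ℂ, IsGaussianInt c → normSq c = 2 →
      normSq (hcfZ z (k+1) - c) < 1 → Gd z k (starRingEnd ℂ c) := by
  intro k
  induction k with
  | zero => intro c _ _ _; trivial
  | succ k ih =>
    intro c hcgi hc2 hclose
    set g := hcfA z (k+1) + starRingEnd ℂ c with hg
    have hggi : IsGaussianInt g := gi_add (gi_nearGauss _) (gi_conj hcgi)
    have h1 : normSq (hcfZ z (k+1) - g) < 1 := by
      have hzsucc : hcfZ z (k+1+1) = (wseq z (k+1))⁻¹ := hcfZ_succ z (k+1)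
      rw [hzsucc] at hclose
      have := step_two' (wseq_ne_zero hz (k+1)) hc2 hclose
      have heq : wseq z (k+1) - starRingEnd ℂ c = hcfZ z (k+1) - g := by
        rw [wseq, hg, hcfA]; ring
      rwa [heq] at this
    obtain ⟨hd0, hd1, hd2, hd3, hd4⟩ := delta_facts hz k
    rcases gi_normSq_cases hggi with h | h | h | h
    · exfalso
      have : g = 0 := Complex.normSq_eq_zero.mp h
      rw [this, sub_zero] at h1
      linarith
    · exfalso
      rcases gi_normSq_one hggi h with h' | h' | h' | h' <;> rw [h'] at h1
      · linarith
      · rw [sub_neg_eq_add] at h1; linarith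
      · linarith
      · rw [sub_neg_eq_add] at h1; linarith
    · have hrec : Gd z k (starRingEnd ℂ g) := ih g hggi h h1
      exact Or.inr ⟨h, hrec⟩
    · exact Or.inl h

/-! ### The sequence of ratios -/

noncomputable def sd (z : ℂ) : ℕ → ℂ
  | 0 => hcfA z 1
  | k+1 => hcfA z (k+2) + (sd z k)⁻¹

/-- Triangle-type estimate. -/
lemma step_four {g t : ℂ} (hg : 4 ≤ normSq g) (ht : normSq t < 1) :
    1 < normSq (g + t) := by
  have h2 : 2 ≤ ‖g‖ := by
    nlinarith [Complex.sq_norm g, norm_nonneg g]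
  have h3 : ‖t‖ < 1 := by
    nlinarith [Complex.sq_norm t, norm_nonneg t]
  have h4 : ‖g‖ ≤ ‖g + t‖ + ‖t‖ := by
    calc ‖g‖ = ‖(g + t) + (-t)‖ := by rw [add_neg_cancel_right]
    _ ≤ ‖g + t‖ + ‖-t‖ := norm_add_le _ _
    _ = ‖g + t‖ + ‖t‖ := by rw [norm_neg]
  have h5 : 1 < ‖g + t‖ := by linarith
  nlinarith [Complex.sq_norm (g + t), norm_nonneg (g + t)]

/-! ### The main induction -/

lemma AB {z : ℂ} (hz : ¬ IsGaussianRational z) :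
    ∀ k, 1 < normSq (sd z k) ∧ ∀ x : ℂ, Gd z (k+1) x → 1 < normSq (sd z k + x) := by
  intro k
  induction k with
  | zero =>
    have h2 : 2 ≤ normSq (hcfA z 1) := by
      rcases hcfA_two_or_four hz 0 with h | h <;> linarith
    constructor
    · show 1 < normSq (hcfA z 1); linarith
    · intro x hx
      show 1 < normSq (hcfA z 1 + x)
      rcases hx with h | ⟨h, _⟩ <;> linarith
  | succ k ih =>
    obtain ⟨hA, hB⟩ := ih
    have hsne : sd z k ≠ 0 := by
      intro h0
      rw [h0] at hA
      simp at hA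
      linarith
    have htinv : normSq (sd z k)⁻¹ < 1 := by
      rw [Complex.normSq_inv]
      rw [inv_lt_one_iff₀]
      right; exact hA
    have hBstep : ∀ g : ℂ, (4 ≤ normSq g ∨ (normSq g = 2 ∧ Gd z (k+1) (starRingEnd ℂ g))) →
        1 < normSq (g + (sd z k)⁻¹) := by
      intro g hcase
      rcases hcase with h | ⟨h2, hGd⟩
      · exact step_four h htinv
      · exact step_two hsne h2 (hB _ hGd)
    constructor
    · show 1 < normSq (hcfA z (k+2) + (sd z k)⁻¹)
      apply hBstep
      rcases hcfA_two_or_four hz (k+1) with h | h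
      · right
        refine ⟨h, ?_⟩
        have hbox : normSq (hcfZ z (k+2) - hcfA z (k+2)) < 1 := by
          have := wseq_normSq_le z (k+2)
          rw [wseq] at this
          calc normSq (hcfZ z (k+2) - hcfA z (k+2))
              = normSq (hcfZ z (k+2) - nearGauss (hcfZ z (k+2))) := by rw [hcfA]
          _ ≤ 1/2 := this
          _ < 1 := by norm_num
        exact mainZ hz (k+1) (hcfA z (k+2)) (gi_nearGauss _) h hbox
      · exact Or.inl h
    · intro x hx
      have : sd z (k+1) + x = (hcfA z (k+2) + x) + (sd z k)⁻¹ := by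
        show hcfA z (k+2) + (sd z k)⁻¹ + x = _
        ring
      rw [this]
      apply hBstep
      rcases hx with h | ⟨h, hGd⟩
      · exact Or.inl h
      · exact Or.inr ⟨h, hGd⟩

/-! ### Linking `sd` with the denominators -/

lemma Qlink {z : ℂ} (hz : ¬ IsGaussianRational z) :
    ∀ k, hcfQ z (k+3) = sd z k * hcfQ z (k+2) := by
  intro k
  induction k with
  | zero =>
    show hcfA z 1 * hcfQ z 2 + hcfQ z 1 = sd z 0 * hcfQ z 2
    simp [hcfQ, sd]
  | succ k ih =>
    have hsne : sd z k ≠ 0 := by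
      have hA := (AB hz k).1
      intro h0
      rw [h0] at hA
      simp at hA
      linarith
    show hcfA z (k+2) * hcfQ z (k+3) + hcfQ z (k+2) = sd z (k+1) * hcfQ z (k+3)
    rw [ih]
    show _ = (hcfA z (k+2) + (sd z k)⁻¹) * (sd z k * hcfQ z (k+2))
    field_simp

end HurwitzAux

/-- for `z ∈ ℂ \ ℚ(i)`, the sequence `(|q_n|)_{n ≥ 0}` is strictly
increasing (`q n = hcfQ z (n+2)`). -/
theorem hcf_q_strictMono (z : ℂ) (hz : ¬ IsGaussianRational z) :
    StrictMono (fun n : ℕ => ‖hcfQ z (n + 2)‖) := by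
  apply strictMono_nat_of_lt_succ
  intro n
  have hpos : ∀ m : ℕ, 0 < ‖hcfQ z (m + 2)‖ := by
    intro m
    induction m with
    | zero =>
      have : hcfQ z 2 = 1 := by simp [hcfQ]
      simp [this]
    | succ m ihm =>
      have hlink : hcfQ z (m+3) = HurwitzAux.sd z m * hcfQ z (m+2) :=
        HurwitzAux.Qlink hz m
      have hs1 : 1 < Complex.normSq (HurwitzAux.sd z m) := (HurwitzAux.AB hz m).1
      have habs : 1 < ‖HurwitzAux.sd z m‖ := by
        nlinarith [Complex.sq_norm (HurwitzAux.sd z m),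
          norm_nonneg (HurwitzAux.sd z m)]
      have : (m + 1) + 2 = m + 3 := by ring
      rw [this, hlink, norm_mul]
      positivity
  have hlink : hcfQ z (n+3) = HurwitzAux.sd z n * hcfQ z (n+2) := HurwitzAux.Qlink hz n
  have hs1 : 1 < Complex.normSq (HurwitzAux.sd z n) := (HurwitzAux.AB hz n).1
  have habs : 1 < ‖HurwitzAux.sd z n‖ := by
    nlinarith [Complex.sq_norm (HurwitzAux.sd z n),
      norm_nonneg (HurwitzAux.sd z n)]
  show ‖hcfQ z (n + 2)‖ < ‖hcfQ z (n + 1 + 2)‖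
  have : n + 1 + 2 = n + 3 := by ring
  rw [this, hlink, norm_mul]
  have := hpos n
  nlinarith
end

section
/- Let ζ ∈ ℂ \ ℚ(i) have Hurwitz continued fraction partial quotients (a_n) with |a_n| ≤ M for all n and some M > 0. Then ζ is badly approximable: there exists C > 0 such that for all Gaussian integers p, q with q ≠ 0, |ζ - p/q| > C/|q|². In fact, C = (M+1)^{-1}(M+2)^{-2} works. -/
open Complex Filter

namespace HCFbadAux

lemma gauss_zero : IsGaussianInt 0 := ⟨0, 0, by simp⟩
lemma gauss_one : IsGaussianInt 1 := ⟨1, 0, by simp⟩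

lemma gauss_add {a b : ℂ} (ha : IsGaussianInt a) (hb : IsGaussianInt b) :
    IsGaussianInt (a + b) := by
  obtain ⟨m, n, rfl⟩ := ha; obtain ⟨m', n', rfl⟩ := hb
  exact ⟨m + m', n + n', by push_cast; ring⟩

lemma gauss_mul {a b : ℂ} (ha : IsGaussianInt a) (hb : IsGaussianInt b) :
    IsGaussianInt (a * b) := by
  obtain ⟨m, n, rfl⟩ := ha; obtain ⟨m', n', rfl⟩ := hb
  exact ⟨m*m' - n*n', m*n' + n*m', by push_cast; linear_combination (n*n' : ℂ) * Complex.I_sq⟩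

lemma gauss_neg {a : ℂ} (ha : IsGaussianInt a) : IsGaussianInt (-a) := by
  obtain ⟨m, n, rfl⟩ := ha; exact ⟨-m, -n, by push_cast; ring⟩

lemma gauss_sub {a b : ℂ} (ha : IsGaussianInt a) (hb : IsGaussianInt b) :
    IsGaussianInt (a - b) := by
  rw [sub_eq_add_neg]; exact gauss_add ha (gauss_neg hb)

lemma gauss_nearGauss (z : ℂ) : IsGaussianInt (nearGauss z) := ⟨_, _, rfl⟩

lemma gauss_rat_of_int {a : ℂ} (ha : IsGaussianInt a) : IsGaussianRational a :=
  ⟨a, 1, ha, gauss_one, one_ne_zero, by simp⟩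

lemma one_le_abs_gauss {g : ℂ} (hg : IsGaussianInt g) (h0 : g ≠ 0) :
    1 ≤ ‖g‖ := by
  obtain ⟨m, n, rfl⟩ := hg
  have hre : ((m : ℂ) + (n : ℂ) * I).re = (m : ℝ) := by simp
  have him : ((m : ℂ) + (n : ℂ) * I).im = (n : ℝ) := by simp
  have hnormSq : Complex.normSq ((m : ℂ) + (n : ℂ) * I) = (m:ℝ)^2 + (n:ℝ)^2 := by
    rw [Complex.normSq_apply, hre, him]; ring
  have h1 : (1:ℝ) ≤ (m:ℝ)^2 + (n:ℝ)^2 := by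
    have : m ≠ 0 ∨ n ≠ 0 := by
      by_contra hc
      push_neg at hc
      exact h0 (by simp [hc.1, hc.2])
    rcases this with h | h
    · have : (1:ℤ) ≤ m^2 := by nlinarith [Int.one_le_abs h, _root_.sq_abs m, abs_nonneg m]
      have : (1:ℝ) ≤ (m:ℝ)^2 := by exact_mod_cast this
      nlinarith [sq_nonneg (n:ℝ)]
    · have : (1:ℤ) ≤ n^2 := by nlinarith [Int.one_le_abs h, _root_.sq_abs n, abs_nonneg n]
      have : (1:ℝ) ≤ (n:ℝ)^2 := by exact_mod_cast this
      nlinarith [sq_nonneg (m:ℝ)]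
  have h2 : ‖(m:ℂ) + (n:ℂ)*I‖ ^ 2 = (m:ℝ)^2 + (n:ℝ)^2 := by
    rw [Complex.sq_norm, hnormSq]
  nlinarith [norm_nonneg ((m:ℂ) + (n:ℂ)*I)]

lemma frac_sq (z : ℂ) : ‖z - nearGauss z‖ ^ 2 ≤ 1/2 := by
  rw [Complex.sq_norm, Complex.normSq_apply]
  have h1 : (z - nearGauss z).re = z.re - ⌊z.re + 1/2⌋ := by simp [nearGauss]
  have h2 : (z - nearGauss z).im = z.im - ⌊z.im + 1/2⌋ := by simp [nearGauss]
  rw [h1, h2]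
  have a1 := Int.floor_le (z.re + 1/2)
  have a2 := Int.lt_floor_add_one (z.re + 1/2)
  have b1 := Int.floor_le (z.im + 1/2)
  have b2 := Int.lt_floor_add_one (z.im + 1/2)
  nlinarith [a1, a2, b1, b2]

lemma frac_abs_le_one (z : ℂ) : ‖z - nearGauss z‖ ≤ 1 := by
  nlinarith [frac_sq z, norm_nonneg (z - nearGauss z)]

/-- irrationality propagates -/
lemma irr_step {z : ℂ} (hz : ¬ IsGaussianRational z) :
    z - nearGauss z ≠ 0 ∧ ¬ IsGaussianRational (1 / (z - nearGauss z)) := by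
  have hne : z - nearGauss z ≠ 0 := by
    intro h
    exact hz (by rw [sub_eq_zero] at h; rw [h]; exact gauss_rat_of_int (gauss_nearGauss z))
  refine ⟨hne, ?_⟩
  rintro ⟨p, q, hp, hq, hq0, hpq⟩
  have hp0 : p ≠ 0 := by
    intro h
    rw [h] at hpq
    simp at hpq
    exact hne hpq
  apply hz
  refine ⟨nearGauss z * p + q, p, gauss_add (gauss_mul (gauss_nearGauss z) hp) hq, hp, hp0, ?_⟩
  have key : q = (z - nearGauss z) * p := by
    field_simp [hne] at hpq
    linear_combination hpq
  rw [eq_div_iff hp0]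
  linear_combination -key

end HCFbadAux

namespace HCFbadAux

noncomputable def ff (ζ : ℂ) (n : ℕ) : ℂ := hcfZ ζ n - hcfA ζ n
noncomputable def BB (ζ : ℂ) (n : ℕ) : ℂ := hcfZ ζ n * hcfQ ζ (n+1) + hcfQ ζ n
noncomputable def AA (ζ : ℂ) (n : ℕ) : ℂ := hcfZ ζ n * hcfP ζ (n+1) + hcfP ζ n
noncomputable def DD (ζ : ℂ) (n : ℕ) : ℂ := hcfP ζ (n+1) * hcfQ ζ n - hcfP ζ n * hcfQ ζ (n+1)

variable (ζ : ℂ)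

lemma irrZ (hζ : ¬ IsGaussianRational ζ) : ∀ n, ¬ IsGaussianRational (hcfZ ζ n) := by
  intro n
  induction n with
  | zero => exact hζ
  | succ n ih => exact (irr_step ih).2

lemma ff_ne (hζ : ¬ IsGaussianRational ζ) (n : ℕ) : ff ζ n ≠ 0 :=
  (irr_step (irrZ ζ hζ n)).1

lemma zsucc (n : ℕ) : hcfZ ζ (n+1) = 1 / ff ζ n := rfl

lemma zmul (hζ : ¬ IsGaussianRational ζ) (n : ℕ) : hcfZ ζ (n+1) * ff ζ n = 1 := by
  rw [zsucc]
  exact one_div_mul_cancel (ff_ne ζ hζ n)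

lemma ff_sq (n : ℕ) : ‖ff ζ n‖ ^ 2 ≤ 1/2 := frac_sq (hcfZ ζ n)

lemma ff_le_one (n : ℕ) : ‖ff ζ n‖ ≤ 1 := frac_abs_le_one (hcfZ ζ n)

lemma gaussA (n : ℕ) : IsGaussianInt (hcfA ζ n) := gauss_nearGauss _

lemma gaussPQ : ∀ n, (IsGaussianInt (hcfP ζ n) ∧ IsGaussianInt (hcfQ ζ n)) ∧
    (IsGaussianInt (hcfP ζ (n+1)) ∧ IsGaussianInt (hcfQ ζ (n+1))) := by
  intro n
  induction n with
  | zero => exact ⟨⟨gauss_zero, gauss_one⟩, ⟨gauss_one, gauss_zero⟩⟩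
  | succ n ih =>
      refine ⟨ih.2, ?_, ?_⟩
      · show IsGaussianInt (hcfA ζ n * hcfP ζ (n+1) + hcfP ζ n)
        exact gauss_add (gauss_mul (gaussA ζ n) ih.2.1) ih.1.1
      · show IsGaussianInt (hcfA ζ n * hcfQ ζ (n+1) + hcfQ ζ n)
        exact gauss_add (gauss_mul (gaussA ζ n) ih.2.2) ih.1.2

lemma BB_zero : BB ζ 0 = 1 := by simp [BB, hcfQ, hcfZ]

lemma BB_succ_mul (hζ : ¬ IsGaussianRational ζ) (n : ℕ) :
    BB ζ (n+1) * ff ζ n = BB ζ n := by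
  have hz := zmul ζ hζ n
  show (hcfZ ζ (n+1) * hcfQ ζ (n+2) + hcfQ ζ (n+1)) * ff ζ n = _
  have hq : hcfQ ζ (n+2) = hcfA ζ n * hcfQ ζ (n+1) + hcfQ ζ n := rfl
  have hff : hcfA ζ n = hcfZ ζ n - ff ζ n := by rw [ff]; ring
  rw [hq, hff]
  show _ = hcfZ ζ n * hcfQ ζ (n+1) + hcfQ ζ n
  linear_combination ((hcfZ ζ n - ff ζ n) * hcfQ ζ (n+1) + hcfQ ζ n) * hz

lemma AA_succ_mul (hζ : ¬ IsGaussianRational ζ) (n : ℕ) :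
    AA ζ (n+1) * ff ζ n = AA ζ n := by
  have hz := zmul ζ hζ n
  show (hcfZ ζ (n+1) * hcfP ζ (n+2) + hcfP ζ (n+1)) * ff ζ n = _
  have hq : hcfP ζ (n+2) = hcfA ζ n * hcfP ζ (n+1) + hcfP ζ n := rfl
  have hff : hcfA ζ n = hcfZ ζ n - ff ζ n := by rw [ff]; ring
  rw [hq, hff]
  show _ = hcfZ ζ n * hcfP ζ (n+1) + hcfP ζ n
  linear_combination ((hcfZ ζ n - ff ζ n) * hcfP ζ (n+1) + hcfP ζ n) * hz

lemma BB_ne (hζ : ¬ IsGaussianRational ζ) (n : ℕ) : BB ζ n ≠ 0 := by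
  induction n with
  | zero => rw [BB_zero]; exact one_ne_zero
  | succ n ih =>
      intro h
      apply ih
      rw [← BB_succ_mul ζ hζ n, h, zero_mul]

lemma zeta_BB (hζ : ¬ IsGaussianRational ζ) (n : ℕ) : ζ * BB ζ n = AA ζ n := by
  induction n with
  | zero => simp [BB_zero, AA, hcfP, hcfZ]
  | succ n ih =>
      have h1 := BB_succ_mul ζ hζ n
      have h2 := AA_succ_mul ζ hζ n
      have key : (ζ * BB ζ (n+1)) * ff ζ n = AA ζ (n+1) * ff ζ n := by
        rw [h2, mul_assoc, h1, ih]
      exact mul_right_cancel₀ (ff_ne ζ hζ n) key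

lemma DD_succ (n : ℕ) : DD ζ (n+1) = - DD ζ n := by
  show hcfP ζ (n+2) * hcfQ ζ (n+1) - hcfP ζ (n+1) * hcfQ ζ (n+2) = _
  have hq : hcfQ ζ (n+2) = hcfA ζ n * hcfQ ζ (n+1) + hcfQ ζ n := rfl
  have hp : hcfP ζ (n+2) = hcfA ζ n * hcfP ζ (n+1) + hcfP ζ n := rfl
  rw [hq, hp, DD]; ring

lemma abs_DD (n : ℕ) : ‖DD ζ n‖ = 1 := by
  induction n with
  | zero => simp [DD, hcfP, hcfQ]
  | succ n ih => rw [DD_succ, norm_neg, ih]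

lemma key_identity (hζ : ¬ IsGaussianRational ζ) (n : ℕ) :
    (hcfQ ζ (n+2) * ζ - hcfP ζ (n+2)) * BB ζ (n+1) = - DD ζ (n+1) := by
  have h := zeta_BB ζ hζ (n+1)
  simp only [BB, AA, DD] at h ⊢
  linear_combination hcfQ ζ (n+2) * h

lemma absB_sq_succ (hζ : ¬ IsGaussianRational ζ) (n : ℕ) :
    2 * ‖BB ζ n‖ ^ 2 ≤ ‖BB ζ (n+1)‖ ^ 2 := by
  have h : ‖BB ζ (n+1)‖ * ‖ff ζ n‖ = ‖BB ζ n‖ := by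
    rw [← norm_mul, BB_succ_mul ζ hζ n]
  have h2 : ‖BB ζ n‖ ^ 2
      = ‖BB ζ (n+1)‖ ^ 2 * ‖ff ζ n‖ ^ 2 := by
    rw [← h]; ring
  nlinarith [ff_sq ζ n, sq_nonneg (‖BB ζ (n+1)‖)]

lemma absB_pow (hζ : ¬ IsGaussianRational ζ) (n : ℕ) :
    (2:ℝ) ^ n ≤ ‖BB ζ n‖ ^ 2 := by
  induction n with
  | zero => simp [BB_zero]
  | succ n ih =>
      have h := absB_sq_succ ζ hζ n
      rw [pow_succ]
      nlinarith

lemma Q_id (n : ℕ) : hcfQ ζ (n+2) = BB ζ n - ff ζ n * hcfQ ζ (n+1) := by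
  have hq : hcfQ ζ (n+2) = hcfA ζ n * hcfQ ζ (n+1) + hcfQ ζ n := rfl
  rw [hq, BB, ff]; ring

lemma absQ_sq (hζ : ¬ IsGaussianRational ζ) :
    ∀ n, ‖hcfQ ζ (n+1)‖ ^ 2 ≤ 2 * ‖BB ζ n‖ ^ 2 := by
  intro n
  induction n with
  | zero => simp [hcfQ, BB_zero]
  | succ n ih =>
      have h1 : ‖hcfQ ζ (n+2)‖ ≤
          ‖BB ζ n‖ + ‖ff ζ n‖ * ‖hcfQ ζ (n+1)‖ := by
        rw [Q_id ζ n]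
        calc ‖BB ζ n - ff ζ n * hcfQ ζ (n+1)‖ ≤
            ‖BB ζ n‖ + ‖ff ζ n * hcfQ ζ (n+1)‖ :=
              norm_sub_le _ _
          _ = _ := by rw [norm_mul]
      have h2 : ‖ff ζ n‖ * ‖hcfQ ζ (n+1)‖ ≤ ‖BB ζ n‖ := by
        nlinarith [ff_sq ζ n, norm_nonneg (ff ζ n), norm_nonneg (hcfQ ζ (n+1)),
          norm_nonneg (BB ζ n), ih]
      have h3 : ‖hcfQ ζ (n+2)‖ ≤ 2 * ‖BB ζ n‖ := by linarith
      have h4 := absB_sq_succ ζ hζ n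
      nlinarith [norm_nonneg (hcfQ ζ (n+2)), norm_nonneg (BB ζ n)]

lemma absQ_le_2B (hζ : ¬ IsGaussianRational ζ) (n : ℕ) :
    ‖hcfQ ζ (n+2)‖ ≤ 2 * ‖BB ζ n‖ := by
  have h1 : ‖hcfQ ζ (n+2)‖ ≤
      ‖BB ζ n‖ + ‖ff ζ n‖ * ‖hcfQ ζ (n+1)‖ := by
    rw [Q_id ζ n]
    calc ‖BB ζ n - ff ζ n * hcfQ ζ (n+1)‖ ≤
        ‖BB ζ n‖ + ‖ff ζ n * hcfQ ζ (n+1)‖ :=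
          norm_sub_le _ _
      _ = _ := by rw [norm_mul]
  have h2 : ‖ff ζ n‖ * ‖hcfQ ζ (n+1)‖ ≤ ‖BB ζ n‖ := by
    nlinarith [ff_sq ζ n, norm_nonneg (ff ζ n), norm_nonneg (hcfQ ζ (n+1)),
      norm_nonneg (BB ζ n), absQ_sq ζ hζ n]
  linarith

lemma Qne (hζ : ¬ IsGaussianRational ζ) (n : ℕ) : hcfQ ζ (n+2) ≠ 0 := by
  intro h0
  have hk := key_identity ζ hζ n
  rw [h0, zero_mul, zero_sub] at hk
  have habs : ‖hcfP ζ (n+2)‖ * ‖BB ζ (n+1)‖ = 1 := by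
    have := congrArg (‖·‖) hk
    rw [norm_mul, norm_neg, norm_neg, abs_DD ζ (n+1)] at this
    exact this
  have hDval : DD ζ (n+1) = hcfP ζ (n+2) * hcfQ ζ (n+1) := by
    show hcfP ζ (n+2) * hcfQ ζ (n+1) - hcfP ζ (n+1) * hcfQ ζ (n+2) = _
    rw [h0]; ring
  have hPne : hcfP ζ (n+2) ≠ 0 := by
    intro hP
    have hD := abs_DD ζ (n+1)
    rw [hDval, hP, zero_mul] at hD
    simp at hD
  have hP1 : 1 ≤ ‖hcfP ζ (n+2)‖ :=
    one_le_abs_gauss (gaussPQ ζ (n+1)).2.1 hPne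
  have hB2 : (2:ℝ) ≤ ‖BB ζ (n+1)‖ ^ 2 := by
    calc (2:ℝ) = 2^1 := by norm_num
      _ ≤ 2^(n+1) := by
        apply pow_le_pow_right₀ (by norm_num)
        omega
      _ ≤ _ := absB_pow ζ hζ (n+1)
  have hBle : ‖BB ζ (n+1)‖ ≤ 1 := by
    nlinarith [norm_nonneg (BB ζ (n+1))]
  nlinarith [norm_nonneg (BB ζ (n+1))]

lemma absB_succ_le (hζ : ¬ IsGaussianRational ζ) (M : ℝ)
    (hbound : ∀ n : ℕ, ‖hcfA ζ n‖ ≤ M) (n : ℕ) :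
    ‖BB ζ (n+1)‖ ≤ (M + 1) * ‖BB ζ n‖ := by
  have h1 : ‖BB ζ (n+1)‖ * ‖ff ζ n‖ = ‖BB ζ n‖ := by
    rw [← norm_mul, BB_succ_mul ζ hζ n]
  have hz1 : ‖hcfZ ζ (n+1)‖ * ‖ff ζ n‖ = 1 := by
    rw [← norm_mul, zmul ζ hζ n, norm_one]
  have hzle : ‖hcfZ ζ (n+1)‖ ≤ M + 1 := by
    have hid : hcfZ ζ (n+1) = hcfA ζ (n+1) + ff ζ (n+1) := by rw [ff]; ring
    rw [hid]
    calc ‖hcfA ζ (n+1) + ff ζ (n+1)‖ ≤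
        ‖hcfA ζ (n+1)‖ + ‖ff ζ (n+1)‖ := norm_add_le _ _
      _ ≤ M + 1 := add_le_add (hbound (n+1)) (ff_le_one ζ (n+1))
  have heq : ‖BB ζ (n+1)‖ = ‖BB ζ n‖ * ‖hcfZ ζ (n+1)‖ := by
    calc ‖BB ζ (n+1)‖
        = ‖BB ζ (n+1)‖ * (‖hcfZ ζ (n+1)‖ * ‖ff ζ n‖) := by
          rw [hz1, mul_one]
      _ = (‖BB ζ (n+1)‖ * ‖ff ζ n‖) * ‖hcfZ ζ (n+1)‖ := by
          ring
      _ = ‖BB ζ n‖ * ‖hcfZ ζ (n+1)‖ := by rw [h1]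
  rw [heq]
  have hBpos : 0 ≤ ‖BB ζ n‖ := norm_nonneg _
  nlinarith

lemma M_ge_one (hζ : ¬ IsGaussianRational ζ) (M : ℝ)
    (hbound : ∀ n : ℕ, ‖hcfA ζ n‖ ≤ M) : 1 ≤ M := by
  have hz1 : ‖hcfZ ζ 1‖ * ‖ff ζ 0‖ = 1 := by
    rw [← norm_mul, zmul ζ hζ 0, norm_one]
  have hf0 := ff_sq ζ 0
  have hz1sq : 2 ≤ ‖hcfZ ζ 1‖ ^ 2 := by
    nlinarith [norm_nonneg (hcfZ ζ 1), norm_nonneg (ff ζ 0)]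
  have hane : hcfA ζ 1 ≠ 0 := by
    intro h
    have hid : ff ζ 1 = hcfZ ζ 1 := by rw [ff, h]; ring
    have hf1 := ff_sq ζ 1
    rw [hid] at hf1
    linarith
  have h1 := one_le_abs_gauss (gaussA ζ 1) hane
  linarith [hbound 1]

end HCFbadAux


set_option maxHeartbeats 1600000

open HCFbadAux in
/-- bounded partial quotients imply badly approximable, with explicit
constant `C = (M+1)⁻¹ (M+2)⁻²`. -/
theorem bounded_pq_implies_bad (ζ : ℂ) (hζ : ¬ IsGaussianRational ζ) (M : ℝ) (hM : 0 < M)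
    (hbound : ∀ n : ℕ, ‖hcfA ζ n‖ ≤ M) :
    ∀ p q : ℂ, IsGaussianInt p → IsGaussianInt q → q ≠ 0 →
      (M + 1)⁻¹ * (M + 2)⁻¹ ^ 2 / ‖q‖ ^ 2 < ‖ζ - p / q‖ := by
  intro p q hp hq hq0
  classical
  have hM1 : 1 ≤ M := M_ge_one ζ hζ M hbound
  have hq1 : 1 ≤ ‖q‖ := one_le_abs_gauss hq hq0
  have hqpos : (0:ℝ) < ‖q‖ := by linarith
  -- choose minimal n with |B (n+1)| > 2|q|
  have hex : ∃ n : ℕ, 2 * ‖q‖ < ‖BB ζ (n+1)‖ := by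
    obtain ⟨k, hk⟩ := pow_unbounded_of_one_lt (4 * ‖q‖ ^ 2) (by norm_num : (1:ℝ) < 2)
    refine ⟨k, ?_⟩
    have h1 : (2:ℝ)^k ≤ 2^(k+1) := by
      apply pow_le_pow_right₀ (by norm_num); omega
    have h2 := absB_pow ζ hζ (k+1)
    nlinarith [norm_nonneg (BB ζ (k+1))]
  set n := Nat.find hex with hn
  have hB1 : 2 * ‖q‖ < ‖BB ζ (n+1)‖ := Nat.find_spec hex
  have hBn : ‖BB ζ n‖ ≤ 2 * ‖q‖ := by
    rcases Nat.eq_zero_or_pos n with h | h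
    · rw [h, BB_zero, norm_one]; linarith
    · obtain ⟨m, hm⟩ : ∃ m, n = m + 1 := ⟨n - 1, by omega⟩
      have hmin := Nat.find_min hex (show m < n by omega)
      push_neg at hmin
      rw [hm]
      exact hmin
  clear_value n
  -- abbreviations
  set r := ‖q‖ with hr
  set b := ‖BB ζ (n+1)‖ with hbdef
  set s := ‖hcfQ ζ (n+2)‖ with hsdef
  have hQ2ne : hcfQ ζ (n+2) ≠ 0 := Qne ζ hζ n
  have hs1 : 1 ≤ s := one_le_abs_gauss (gaussPQ ζ (n+1)).2.2 hQ2ne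
  have hspos : (0:ℝ) < s := by linarith
  have hbpos : (0:ℝ) < b := by linarith
  have hble : b ≤ 2*(M+1)*r := by
    have := absB_succ_le ζ hζ M hbound n
    nlinarith
  have hsle : s ≤ 4*r := by
    have := absQ_le_2B ζ hζ n
    nlinarith
  -- key identity in abs form
  have hkey := key_identity ζ hζ n
  have habskey : ‖hcfQ ζ (n+2) * ζ - hcfP ζ (n+2)‖ * b = 1 := by
    have := congrArg (‖·‖) hkey
    rw [norm_mul, norm_neg, abs_DD ζ (n+1)] at this
    exact this
  have hfrac : ζ - hcfP ζ (n+2) / hcfQ ζ (n+2)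
      = (hcfQ ζ (n+2) * ζ - hcfP ζ (n+2)) / hcfQ ζ (n+2) := by
    field_simp
  have hE : ‖ζ - hcfP ζ (n+2) / hcfQ ζ (n+2)‖ = 1/(b*s) := by
    rw [hfrac, norm_div]
    rw [show ‖hcfQ ζ (n+2) * ζ - hcfP ζ (n+2)‖ = 1/b by
      rw [eq_div_iff (ne_of_gt hbpos)]; exact habskey]
    rw [← hsdef, div_div]
  have hC0 : (M + 1)⁻¹ * (M + 2)⁻¹ ^ 2 = 1/((M+1)*(M+2)^2) := by
    rw [inv_pow]
    field_simp
  by_cases hg : p * hcfQ ζ (n+2) - hcfP ζ (n+2) * q = 0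
  · -- case A : p/q is the convergent
    have hpq_eq : p / q = hcfP ζ (n+2) / hcfQ ζ (n+2) := by
      rw [div_eq_div_iff hq0 hQ2ne]
      linear_combination hg
    rw [hpq_eq, hE]
    -- |q| ≥ |Q2|
    have hqd : q * DD ζ (n+1) = -(hcfQ ζ (n+2) * (hcfP ζ (n+1) * q - p * hcfQ ζ (n+1))) := by
      simp only [DD]
      linear_combination (-(hcfQ ζ (n+1))) * hg
    have hhne : hcfP ζ (n+1) * q - p * hcfQ ζ (n+1) ≠ 0 := by
      intro h0
      rw [h0, mul_zero, neg_zero] at hqd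
      have : ‖q * DD ζ (n+1)‖ = 0 := by rw [hqd, norm_zero]
      rw [norm_mul, abs_DD ζ (n+1), mul_one] at this
      exact hq0 (by rwa [norm_eq_zero] at this)
    have hgaussh : IsGaussianInt (hcfP ζ (n+1) * q - p * hcfQ ζ (n+1)) :=
      gauss_sub (gauss_mul (gaussPQ ζ n).2.1 hq) (gauss_mul hp (gaussPQ ζ n).2.2)
    have hh1 : 1 ≤ ‖hcfP ζ (n+1) * q - p * hcfQ ζ (n+1)‖ :=
      one_le_abs_gauss hgaussh hhne
    have hsler : s ≤ r := by
      have := congrArg (‖·‖) hqd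
      rw [norm_mul, abs_DD ζ (n+1), mul_one, norm_neg, norm_mul] at this
      rw [hr, this, ← hsdef]
      nlinarith [norm_nonneg (hcfQ ζ (n+2))]
    -- final : C0 / r^2 < 1/(b*s)
    rw [div_lt_div_iff₀ (by positivity) (by positivity), hC0]
    have hbs : b * s ≤ (2*(M+1)*r) * r := by
      apply mul_le_mul hble hsler (by linarith) (by positivity)
    have hfac : 2*(M+1) < (M+1)*(M+2)^2 := by nlinarith
    have hr2pos : (0:ℝ) < r^2 := by positivity
    have := mul_lt_mul_of_pos_right hfac hr2pos
    rw [div_mul_eq_mul_div, div_lt_iff₀ (by positivity)]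
    nlinarith
  · -- case B
    have hg1 : 1 ≤ ‖p * hcfQ ζ (n+2) - hcfP ζ (n+2) * q‖ :=
      one_le_abs_gauss
        (gauss_sub (gauss_mul hp (gaussPQ ζ (n+1)).2.2) (gauss_mul (gaussPQ ζ (n+1)).2.1 hq))
        hg
    have hdiff : p/q - hcfP ζ (n+2) / hcfQ ζ (n+2)
        = (p * hcfQ ζ (n+2) - hcfP ζ (n+2) * q) / (q * hcfQ ζ (n+2)) := by
      field_simp
    have habsdiff : 1/(r*s) ≤ ‖p/q - hcfP ζ (n+2) / hcfQ ζ (n+2)‖ := by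
      rw [hdiff, norm_div, norm_mul, ← hr, ← hsdef]
      gcongr
    have hEsmall : ‖ζ - hcfP ζ (n+2) / hcfQ ζ (n+2)‖ < 1/(2*r*s) := by
      rw [hE]
      exact one_div_lt_one_div_of_lt (by positivity) (by nlinarith)
    have htri : ‖p/q - hcfP ζ (n+2) / hcfQ ζ (n+2)‖
        ≤ ‖ζ - p/q‖ + ‖ζ - hcfP ζ (n+2) / hcfQ ζ (n+2)‖ := by
      have hid : p/q - hcfP ζ (n+2) / hcfQ ζ (n+2)
          = (ζ - hcfP ζ (n+2) / hcfQ ζ (n+2)) - (ζ - p/q) := by ring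
      calc ‖p/q - hcfP ζ (n+2) / hcfQ ζ (n+2)‖
          = ‖(ζ - hcfP ζ (n+2) / hcfQ ζ (n+2)) - (ζ - p/q)‖ := by rw [← hid]
        _ ≤ ‖ζ - hcfP ζ (n+2) / hcfQ ζ (n+2)‖ + ‖ζ - p/q‖ :=
            norm_sub_le _ _
        _ = ‖ζ - p/q‖ + ‖ζ - hcfP ζ (n+2) / hcfQ ζ (n+2)‖ := by ring
    have hX : 1/(2*r*s) < ‖ζ - p/q‖ := by
      have hhalf : 1/(r*s) - 1/(2*r*s) = 1/(2*r*s) := by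
        field_simp
        ring
      linarith
    rw [div_lt_iff₀ (by positivity), hC0]
    have hstep : 1/(2*r*s) * r^2 = r/(2*s) := by
      field_simp
    have h8 : (1:ℝ)/8 ≤ r/(2*s) := by
      rw [div_le_div_iff₀ (by norm_num) (by positivity)]
      linarith
    have hC0lt : 1/((M+1)*(M+2)^2) < 1/8 := by
      apply one_div_lt_one_div_of_lt (by norm_num)
      nlinarith
    have hmul := mul_lt_mul_of_pos_right hX (show (0:ℝ) < r^2 by positivity)
    rw [hstep] at hmul
    linarith
end

section
/- Let ζ ∈ ℂ \ ℚ(i) be badly approximable with constant C > 0 (so |ζ - p/q| > C/|q|² for all p, q ∈ ℤ[i], q ≠ 0). Let (a_n) be the Hurwitz continued fraction partial quotients of ζ and γ = (1 - √2/2)^{-1}. Then |a_n| ≤ γ/C + 1 for all n ≥ 1; in particular the partial quotients are bounded. -/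
open Complex Filter

noncomputable def hcfD (z : ℂ) (n : ℕ) : ℂ := hcfQ z n * z - hcfP z n

lemma isGaussianInt_nearGauss (z : ℂ) : IsGaussianInt (nearGauss z) := ⟨_, _, rfl⟩

lemma IsGaussianInt.add {x y : ℂ} (hx : IsGaussianInt x) (hy : IsGaussianInt y) :
    IsGaussianInt (x + y) := by
  obtain ⟨a, b, rfl⟩ := hx; obtain ⟨c, d, rfl⟩ := hy
  exact ⟨a + c, b + d, by push_cast; ring⟩

lemma IsGaussianInt.mul {x y : ℂ} (hx : IsGaussianInt x) (hy : IsGaussianInt y) :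
    IsGaussianInt (x * y) := by
  obtain ⟨a, b, rfl⟩ := hx; obtain ⟨c, d, rfl⟩ := hy
  exact ⟨a * c - b * d, a * d + b * c, by push_cast; linear_combination ((b:ℂ) * d) * Complex.I_sq⟩

lemma IsGaussianInt.isGR {x : ℂ} (hx : IsGaussianInt x) : IsGaussianRational x :=
  ⟨x, 1, hx, ⟨1, 0, by simp⟩, one_ne_zero, by simp⟩

lemma IsGaussianRational.add_int {x g : ℂ} (hx : IsGaussianRational x) (hg : IsGaussianInt g) :
    IsGaussianRational (x + g) := by
  obtain ⟨p, q, hp, hq, hq0, rfl⟩ := hx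
  exact ⟨p + g * q, q, hp.add (hg.mul hq), hq, hq0, by field_simp⟩

lemma IsGaussianRational.inv {x : ℂ} (hx : IsGaussianRational x) : IsGaussianRational x⁻¹ := by
  obtain ⟨p, q, hp, hq, hq0, rfl⟩ := hx
  by_cases hp0 : p = 0
  · subst hp0; simpa using IsGaussianInt.isGR (x := 0) ⟨0, 0, by simp⟩
  · exact ⟨q, p, hq, hp, hp0, by rw [inv_div]⟩

lemma hcfZ_not_rat (ζ : ℂ) (h : ¬ IsGaussianRational ζ) :
    ∀ n, ¬ IsGaussianRational (hcfZ ζ n) := by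
  intro n
  induction n with
  | zero => exact h
  | succ n ih =>
    intro hr
    apply ih
    set w := hcfZ ζ n - nearGauss (hcfZ ζ n) with hw
    have hz : hcfZ ζ (n+1) = w⁻¹ := by rw [hcfZ]; exact one_div _
    rw [hz] at hr
    have hgw : IsGaussianRational w := by
      have := hr.inv
      rwa [inv_inv] at this
    have : IsGaussianRational (w + nearGauss (hcfZ ζ n)) :=
      hgw.add_int (isGaussianInt_nearGauss _)
    simpa [hw] using this

lemma frac_ne_zero {ζ : ℂ} {n : ℕ} (h : ¬ IsGaussianRational (hcfZ ζ n)) :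
    hcfZ ζ n - hcfA ζ n ≠ 0 := by
  intro h0
  apply h
  have : hcfZ ζ n = hcfA ζ n := by rwa [sub_eq_zero] at h0
  rw [this]
  exact (isGaussianInt_nearGauss _).isGR

lemma abs_frac_le (z : ℂ) : ‖z - nearGauss z‖ ≤ Real.sqrt 2 / 2 := by
  have h1 : (z - nearGauss z).re = z.re - ⌊z.re + 1/2⌋ := by simp [nearGauss]
  have h2 : (z - nearGauss z).im = z.im - ⌊z.im + 1/2⌋ := by simp [nearGauss]
  have e1 := Int.floor_le (z.re + 1/2)
  have e2 := Int.lt_floor_add_one (z.re + 1/2)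
  have e3 := Int.floor_le (z.im + 1/2)
  have e4 := Int.lt_floor_add_one (z.im + 1/2)
  rw [Complex.norm_def]
  have hn : Complex.normSq (z - nearGauss z) ≤ (Real.sqrt 2 / 2)^2 := by
    have hs : Real.sqrt 2 ^ 2 = 2 := Real.sq_sqrt (by norm_num)
    rw [Complex.normSq_apply, h1, h2]
    nlinarith [e1, e2, e3, e4]
  calc Real.sqrt (Complex.normSq (z - nearGauss z)) ≤ Real.sqrt ((Real.sqrt 2 / 2)^2) :=
        Real.sqrt_le_sqrt hn
    _ = Real.sqrt 2 / 2 := Real.sqrt_sq (by positivity)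

lemma det_eq (ζ : ℂ) : ∀ n, hcfP ζ (n+1) * hcfQ ζ n - hcfP ζ n * hcfQ ζ (n+1) = (-1)^n := by
  intro n
  induction n with
  | zero => simp [hcfP, hcfQ]
  | succ n ih =>
    rw [show hcfP ζ (n+2) = hcfA ζ n * hcfP ζ (n+1) + hcfP ζ n from rfl,
        show hcfQ ζ (n+2) = hcfA ζ n * hcfQ ζ (n+1) + hcfQ ζ n from rfl, pow_succ]
    linear_combination (-1 : ℂ) * ih

lemma cross_eq (ζ : ℂ) (n : ℕ) :
    hcfQ ζ (n+1) * hcfD ζ n - hcfQ ζ n * hcfD ζ (n+1) = (-1)^n := by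
  have h := det_eq ζ n
  simp only [hcfD]
  linear_combination h

lemma isGaussianInt_hcfPQ (ζ : ℂ) : ∀ n, IsGaussianInt (hcfP ζ n) ∧ IsGaussianInt (hcfQ ζ n)
  | 0 => ⟨⟨0, 0, by simp [hcfP]⟩, ⟨1, 0, by simp [hcfQ]⟩⟩
  | 1 => ⟨⟨1, 0, by simp [hcfP]⟩, ⟨0, 0, by simp [hcfQ]⟩⟩
  | (n+2) => by
    have h1 := isGaussianInt_hcfPQ ζ n
    have h2 := isGaussianInt_hcfPQ ζ (n+1)
    constructor
    · rw [show hcfP ζ (n+2) = hcfA ζ n * hcfP ζ (n+1) + hcfP ζ n from rfl]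
      exact ((isGaussianInt_nearGauss _).mul h2.1).add h1.1
    · rw [show hcfQ ζ (n+2) = hcfA ζ n * hcfQ ζ (n+1) + hcfQ ζ n from rfl]
      exact ((isGaussianInt_nearGauss _).mul h2.2).add h1.2

lemma hcfD_succ (ζ : ℂ) (hζ : ¬ IsGaussianRational ζ) :
    ∀ n, hcfD ζ (n+2) = -(hcfZ ζ n - hcfA ζ n) * hcfD ζ (n+1) := by
  intro n
  induction n with
  | zero =>
    simp only [hcfD, show hcfP ζ 2 = hcfA ζ 0 * hcfP ζ 1 + hcfP ζ 0 from rfl,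
      show hcfQ ζ 2 = hcfA ζ 0 * hcfQ ζ 1 + hcfQ ζ 0 from rfl,
      show hcfP ζ 0 = 0 from rfl, show hcfP ζ 1 = 1 from rfl,
      show hcfQ ζ 0 = 1 from rfl, show hcfQ ζ 1 = 0 from rfl,
      show hcfZ ζ 0 = ζ from rfl]
    ring
  | succ n ih =>
    have hf : hcfZ ζ n - hcfA ζ n ≠ 0 := frac_ne_zero (hcfZ_not_rat ζ hζ n)
    have hz : hcfZ ζ (n+1) = 1 / (hcfZ ζ n - hcfA ζ n) := by
      rw [hcfZ]; rfl
    have hrec : hcfD ζ (n+3) = hcfA ζ (n+1) * hcfD ζ (n+2) + hcfD ζ (n+1) := by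
      simp only [hcfD, show hcfP ζ (n+3) = hcfA ζ (n+1) * hcfP ζ (n+2) + hcfP ζ (n+1) from rfl,
        show hcfQ ζ (n+3) = hcfA ζ (n+1) * hcfQ ζ (n+2) + hcfQ ζ (n+1) from rfl]
      ring
    rw [hrec, hz, ih]
    field_simp
    ring

lemma abs_hcfD_succ (ζ : ℂ) (hζ : ¬ IsGaussianRational ζ) (n : ℕ) :
    ‖hcfD ζ (n+2)‖ ≤ Real.sqrt 2 / 2 * ‖hcfD ζ (n+1)‖ := by
  rw [hcfD_succ ζ hζ n, norm_mul, norm_neg]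
  exact mul_le_mul_of_nonneg_right (abs_frac_le _) (norm_nonneg _)

lemma U_lt (ζ : ℂ) (hζ : ¬ IsGaussianRational ζ) :
    ∀ n, 1 ≤ n → ‖hcfQ ζ n‖ * ‖hcfD ζ n‖ < Real.sqrt 2 := by
  intro n hn
  induction n, hn using Nat.le_induction with
  | base =>
    rw [show hcfQ ζ 1 = 0 from rfl]
    simpa using Real.sqrt_pos.mpr (by norm_num : (0:ℝ) < 2)
  | succ n hn ih =>
    obtain ⟨m, rfl⟩ : ∃ m, n = m + 1 := ⟨n - 1, (Nat.succ_pred_eq_of_pos hn).symm⟩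
    set s := Real.sqrt 2 with hsdef
    have hs : s ^ 2 = 2 := Real.sq_sqrt (by norm_num)
    have hs0 : 0 ≤ s := Real.sqrt_nonneg 2
    set A := ‖hcfQ ζ (m+2)‖ with hA
    set B := ‖hcfD ζ (m+2)‖ with hB
    set A0 := ‖hcfQ ζ (m+1)‖ with hA0
    set B0 := ‖hcfD ζ (m+1)‖ with hB0
    have hD : B ≤ s / 2 * B0 := abs_hcfD_succ ζ hζ m
    have hdet : A * B0 ≤ 1 + A0 * B := by
      have e : hcfQ ζ (m+2) * hcfD ζ (m+1) = (-1)^(m+1) + hcfQ ζ (m+1) * hcfD ζ (m+2) := by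
        linear_combination cross_eq ζ (m+1)
      calc A * B0 = ‖hcfQ ζ (m+2) * hcfD ζ (m+1)‖ := (norm_mul _ _).symm
        _ = ‖(-1)^(m+1) + hcfQ ζ (m+1) * hcfD ζ (m+2)‖ := by rw [e]
        _ ≤ ‖(-1 : ℂ)^(m+1)‖ + ‖hcfQ ζ (m+1) * hcfD ζ (m+2)‖ :=
            norm_add_le _ _
        _ = 1 + A0 * B := by rw [norm_pow, norm_neg, norm_one, one_pow, norm_mul]
    have hA0n : 0 ≤ A0 := norm_nonneg _
    have hAn : 0 ≤ A := norm_nonneg _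
    have hB0n : 0 ≤ B0 := norm_nonneg _
    nlinarith [mul_le_mul_of_nonneg_left hD hAn, mul_le_mul_of_nonneg_left hD hA0n,
      mul_le_mul_of_nonneg_left hdet (by positivity : (0:ℝ) ≤ s / 2), ih]

lemma QD_bounds (ζ : ℂ) (hζ : ¬ IsGaussianRational ζ) (n : ℕ) (hn : 1 ≤ n) :
    0 < ‖hcfQ ζ (n+1)‖ * ‖hcfD ζ n‖ ∧
    ‖hcfQ ζ (n+1)‖ * ‖hcfD ζ n‖ < 2 := by
  obtain ⟨m, rfl⟩ : ∃ m, n = m + 1 := ⟨n - 1, (Nat.succ_pred_eq_of_pos hn).symm⟩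
  set s := Real.sqrt 2 with hsdef
  have hs : s ^ 2 = 2 := Real.sq_sqrt (by norm_num)
  have hs0 : 0 ≤ s := Real.sqrt_nonneg 2
  have hU := U_lt ζ hζ (m+1) (by omega)
  have hD : ‖hcfD ζ (m+2)‖ ≤ s / 2 * ‖hcfD ζ (m+1)‖ :=
    abs_hcfD_succ ζ hζ m
  have hsmall : ‖hcfQ ζ (m+1)‖ * ‖hcfD ζ (m+2)‖ < 1 := by
    have h1 : ‖hcfQ ζ (m+1)‖ * ‖hcfD ζ (m+2)‖ ≤
        s / 2 * (‖hcfQ ζ (m+1)‖ * ‖hcfD ζ (m+1)‖) := by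
      nlinarith [mul_le_mul_of_nonneg_left hD (norm_nonneg (hcfQ ζ (m+1)))]
    nlinarith [Real.sqrt_pos.mpr (by norm_num : (0:ℝ) < 2)]
  have e : hcfQ ζ (m+2) * hcfD ζ (m+1) = (-1)^(m+1) + hcfQ ζ (m+1) * hcfD ζ (m+2) := by
    linear_combination cross_eq ζ (m+1)
  have habs1 : ‖(-1 : ℂ)^(m+1)‖ = 1 := by
    rw [norm_pow, norm_neg, norm_one, one_pow]
  constructor
  · have hlow : (1:ℝ) ≤ ‖hcfQ ζ (m+2) * hcfD ζ (m+1)‖ +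
        ‖hcfQ ζ (m+1) * hcfD ζ (m+2)‖ := by
      have : ((-1 : ℂ)^(m+1)) = hcfQ ζ (m+2) * hcfD ζ (m+1) - hcfQ ζ (m+1) * hcfD ζ (m+2) := by
        linear_combination -(cross_eq ζ (m+1))
      calc (1:ℝ) = ‖(-1 : ℂ)^(m+1)‖ := habs1.symm
        _ = ‖hcfQ ζ (m+2) * hcfD ζ (m+1) - hcfQ ζ (m+1) * hcfD ζ (m+2)‖ := by
            rw [this]
        _ ≤ _ := by
            simpa [sub_eq_add_neg, norm_neg] using
              norm_add_le (hcfQ ζ (m+2) * hcfD ζ (m+1))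
                (-(hcfQ ζ (m+1) * hcfD ζ (m+2)))
    rw [norm_mul, norm_mul] at hlow
    linarith
  · have hup : ‖hcfQ ζ (m+2)‖ * ‖hcfD ζ (m+1)‖ ≤
        1 + ‖hcfQ ζ (m+1)‖ * ‖hcfD ζ (m+2)‖ := by
      calc ‖hcfQ ζ (m+2)‖ * ‖hcfD ζ (m+1)‖
          = ‖hcfQ ζ (m+2) * hcfD ζ (m+1)‖ := (norm_mul _ _).symm
        _ = ‖(-1)^(m+1) + hcfQ ζ (m+1) * hcfD ζ (m+2)‖ := by rw [e]
        _ ≤ ‖(-1 : ℂ)^(m+1)‖ + ‖hcfQ ζ (m+1) * hcfD ζ (m+2)‖ :=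
            norm_add_le _ _
        _ = 1 + ‖hcfQ ζ (m+1)‖ * ‖hcfD ζ (m+2)‖ := by
            rw [habs1, norm_mul]
    linarith

/-- if `ζ` is badly approximable with constant `C`, then the HCF partial
quotients satisfy `|a_n| ≤ γ/C + 1` for all `n ≥ 1`, where `γ = (1 - √2/2)⁻¹`. -/
theorem bad_implies_bounded_pq (ζ : ℂ) (hζ : ¬ IsGaussianRational ζ) (C : ℝ) (hC : 0 < C)
    (hbad : ∀ p q : ℂ, IsGaussianInt p → IsGaussianInt q → q ≠ 0 →
      C / ‖q‖ ^ 2 < ‖ζ - p / q‖) :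
    ∀ n : ℕ, 1 ≤ n → ‖hcfA ζ n‖ ≤ (1 - Real.sqrt 2 / 2)⁻¹ / C + 1 := by
  intro n hn
  obtain ⟨m, rfl⟩ : ∃ m, n = m + 1 := ⟨n - 1, (Nat.succ_pred_eq_of_pos hn).symm⟩
  set s := Real.sqrt 2 with hsdef
  have hs : s ^ 2 = 2 := Real.sq_sqrt (by norm_num)
  have hs0 : 0 ≤ s := Real.sqrt_nonneg 2
  have hs1 : 1 < s := by nlinarith
  have hs2 : s < 2 := by nlinarith
  obtain ⟨hpos, hlt2⟩ := QD_bounds ζ hζ (m+1) (by omega)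
  have hQne : hcfQ ζ (m+2) ≠ 0 := by
    intro h0
    rw [show m + 1 + 1 = m + 2 from rfl, h0] at hpos
    simp at hpos
  have hQpos : 0 < ‖hcfQ ζ (m+2)‖ := norm_pos_iff.mpr hQne
  have hCbound : C < ‖hcfQ ζ (m+2)‖ * ‖hcfD ζ (m+2)‖ := by
    have hb := hbad (hcfP ζ (m+2)) (hcfQ ζ (m+2)) (isGaussianInt_hcfPQ ζ (m+2)).1
      (isGaussianInt_hcfPQ ζ (m+2)).2 hQne
    have hrw : ζ - hcfP ζ (m+2) / hcfQ ζ (m+2) = hcfD ζ (m+2) / hcfQ ζ (m+2) := by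
      rw [hcfD]
      field_simp
    rw [hrw, norm_div] at hb
    rw [div_lt_div_iff₀ (pow_pos hQpos 2) hQpos] at hb
    nlinarith [norm_nonneg (hcfD ζ (m+2))]
  have hf : hcfZ ζ m - hcfA ζ m ≠ 0 := frac_ne_zero (hcfZ_not_rat ζ hζ m)
  have hzf : hcfZ ζ (m+1) * (hcfZ ζ m - hcfA ζ m) = 1 := by
    rw [show hcfZ ζ (m+1) = 1 / (hcfZ ζ m - hcfA ζ m) from rfl]
    field_simp
  have habszf : ‖hcfZ ζ (m+1)‖ * ‖hcfZ ζ m - hcfA ζ m‖ = 1 := by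
    rw [← norm_mul, hzf, norm_one]
  have hDrel : ‖hcfD ζ (m+2)‖ =
      ‖hcfZ ζ m - hcfA ζ m‖ * ‖hcfD ζ (m+1)‖ := by
    rw [hcfD_succ ζ hζ m, norm_mul, norm_neg]
  have hzlt : ‖hcfZ ζ (m+1)‖ < 2 / C := by
    rw [lt_div_iff₀ hC]
    have key : ‖hcfZ ζ (m+1)‖ *
        (‖hcfQ ζ (m+2)‖ * ‖hcfD ζ (m+2)‖) =
        ‖hcfQ ζ (m+2)‖ * ‖hcfD ζ (m+1)‖ := by
      rw [hDrel]
      nlinarith [habszf]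
    nlinarith [norm_nonneg (hcfZ ζ (m+1))]
  have haz : ‖hcfA ζ (m+1)‖ ≤ ‖hcfZ ζ (m+1)‖ + s / 2 := by
    have h3 : ‖hcfA ζ (m+1)‖ ≤ ‖hcfZ ζ (m+1)‖ +
        ‖hcfA ζ (m+1) - hcfZ ζ (m+1)‖ := by
      calc ‖hcfA ζ (m+1)‖
          = ‖hcfZ ζ (m+1) + (hcfA ζ (m+1) - hcfZ ζ (m+1))‖ := by
            exact congrArg norm (by ring)
        _ ≤ _ := norm_add_le _ _
    have h4 : ‖hcfA ζ (m+1) - hcfZ ζ (m+1)‖ =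
        ‖hcfZ ζ (m+1) - hcfA ζ (m+1)‖ := by
      rw [← neg_sub, norm_neg]
    have h5 : ‖hcfZ ζ (m+1) - hcfA ζ (m+1)‖ ≤ s / 2 := by
      have := abs_frac_le (hcfZ ζ (m+1))
      simpa [hcfA] using this
    linarith
  have h1s : 0 < 1 - s / 2 := by linarith
  have hγ2 : 2 ≤ (1 - s / 2)⁻¹ := by
    rw [← one_div, le_div_iff₀ h1s]
    linarith
  have hdivle : 2 / C ≤ (1 - s / 2)⁻¹ / C := by gcongr
  have hfin : ‖hcfA ζ (m+1)‖ < 2 / C + s / 2 := by linarith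
  linarith
end

section
/- Every infinite sequence (b_n)_{n≥0} of Gaussian integers with |b_n| ≥ √8 for all n ≥ 1 is the Hurwitz continued fraction of some complex irrational number; i.e., there exists z ∈ ℂ \ ℚ(i) such that the nearest-Gaussian-integer algorithm applied to z produces exactly the partial quotients (b_n)_{n≥0}. -/
open Complex Filter
open Topology

namespace VSeq

lemma sq2 : Real.sqrt 2 ^ 2 = 2 := Real.sq_sqrt (by norm_num)
lemma sq2nn : (0:ℝ) ≤ Real.sqrt 2 := Real.sqrt_nonneg 2
lemma sq2lt : Real.sqrt 2 < 3/2 := by nlinarith [sq2, sq2nn]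
lemma sq2gt : (7/5 : ℝ) < Real.sqrt 2 := by nlinarith [sq2, sq2nn]
lemma sqrt8 : Real.sqrt 8 = 2 * Real.sqrt 2 := by
  rw [show (8:ℝ) = 4 * 2 by norm_num, Real.sqrt_mul (by norm_num)]
  norm_num [Real.sqrt_eq_iff_eq_sq]
lemma Rpos : (0:ℝ) < Real.sqrt 2 + 1 := by nlinarith [sq2nn]
lemma invR : 1 / (Real.sqrt 2 + 1) = Real.sqrt 2 - 1 := by
  rw [div_eq_iff (ne_of_gt Rpos)]; nlinarith [sq2]

noncomputable def s (b : ℕ → ℂ) : ℕ → ℕ → ℂ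
  | 0 => fun _ => 3
  | k+1 => fun n => b n + 1 / s b k (n+1)

variable {b : ℕ → ℂ}

lemma s_lb (hbig : ∀ n : ℕ, 1 ≤ n → Real.sqrt 8 ≤ ‖b n‖) :
    ∀ k n, 1 ≤ n → Real.sqrt 2 + 1 ≤ ‖s b k n‖ := by
  intro k
  induction k with
  | zero =>
      intro n _
      have : ‖(3:ℂ)‖ = 3 := by simp
      simp only [s, this]
      nlinarith [sq2, sq2nn]
  | succ k ih =>
      intro n hn
      have h1 : Real.sqrt 2 + 1 ≤ ‖s b k (n+1)‖ := ih (n+1) (by omega)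
      have hne : ‖s b k (n+1)‖ ≠ 0 := ne_of_gt (lt_of_lt_of_le Rpos h1)
      have h2 : ‖1 / s b k (n+1)‖ ≤ Real.sqrt 2 - 1 := by
        rw [norm_div, norm_one, ← invR]
        exact one_div_le_one_div_of_le Rpos h1
      have h3 : Real.sqrt 8 ≤ ‖b n‖ := hbig n hn
      have h4 : ‖b n‖ ≤ ‖b n + 1 / s b k (n+1)‖ + ‖1 / s b k (n+1)‖ := by
        have := norm_add_le (b n + 1 / s b k (n+1)) (-(1 / s b k (n+1)))
        simpa using this
      show Real.sqrt 2 + 1 ≤ ‖b n + 1 / s b k (n+1)‖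
      rw [sqrt8] at h3
      linarith

lemma s_ne (hbig : ∀ n : ℕ, 1 ≤ n → Real.sqrt 8 ≤ ‖b n‖) (k n : ℕ) (hn : 1 ≤ n) :
    s b k n ≠ 0 := by
  intro h
  have := s_lb hbig k n hn
  rw [h] at this; simp at this; nlinarith [sq2nn]

lemma s_diff (hbig : ∀ n : ℕ, 1 ≤ n → Real.sqrt 8 ≤ ‖b n‖) :
    ∀ k n, ‖s b (k+2) n - s b (k+1) n‖ ≤ (1/5:ℝ)^k := by
  intro k
  induction k with
  | zero =>
      intro n
      have h1 : Real.sqrt 2 + 1 ≤ ‖s b 1 (n+1)‖ := s_lb hbig 1 (n+1) (by omega)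
      have h2 : ‖1 / s b 1 (n+1)‖ ≤ Real.sqrt 2 - 1 := by
        rw [norm_div, norm_one, ← invR]
        exact one_div_le_one_div_of_le Rpos h1
      have e : s b 2 n - s b 1 n = 1 / s b 1 (n+1) - 1 / (3:ℂ) := by
        show (b n + 1 / s b 1 (n+1)) - (b n + 1 / s b 0 (n+1)) = _
        simp [s]
      rw [e]
      have := norm_sub_le (1 / s b 1 (n+1)) (1 / (3:ℂ))
      have h3 : ‖1 / (3:ℂ)‖ = 1/3 := by simp
      simp only [pow_zero]
      nlinarith [sq2lt]
  | succ k ih =>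
      intro n
      set u := s b (k+2) (n+1) with hu
      set v := s b (k+1) (n+1) with hv
      have hua : Real.sqrt 2 + 1 ≤ ‖u‖ := s_lb hbig _ _ (by omega)
      have hva : Real.sqrt 2 + 1 ≤ ‖v‖ := s_lb hbig _ _ (by omega)
      have hune : u ≠ 0 := s_ne hbig _ _ (by omega)
      have hvne : v ≠ 0 := s_ne hbig _ _ (by omega)
      have e : s b (k+3) n - s b (k+2) n = (v - u) / (u * v) := by
        show (b n + 1 / u) - (b n + 1 / v) = _
        field_simp
        ring
      rw [e, norm_div, norm_mul]
      have hd : ‖v - u‖ ≤ (1/5:ℝ)^k := by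
        have := ih (n+1)
        rwa [← norm_neg, neg_sub] at this
      have h5 : (5:ℝ) ≤ ‖u‖ * ‖v‖ := by
        nlinarith [sq2, sq2gt, mul_le_mul hua hva Rpos.le (norm_nonneg u)]
      have hle : ‖v-u‖ / (‖u‖ * ‖v‖) ≤ (1/5:ℝ)^k / 5 :=
        div_le_div₀ (by positivity) hd (by norm_num) h5
      calc ‖v-u‖ / (‖u‖ * ‖v‖) ≤ (1/5:ℝ)^k / 5 := hle
        _ = (1/5:ℝ)^(k+1) := by ring

end VSeq

namespace VSeq2
open VSeq

lemma exists_tail {b : ℕ → ℂ} (hbig : ∀ n : ℕ, 1 ≤ n → Real.sqrt 8 ≤ ‖b n‖) :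
    ∃ t : ℕ → ℂ, (∀ n, 1 ≤ n → Real.sqrt 2 + 1 ≤ ‖t n‖) ∧
      (∀ n, t n = b n + 1 / t (n+1)) := by
  have hcau : ∀ n, CauchySeq (fun k => s b (k+1) n) := by
    intro n
    apply cauchySeq_of_le_geometric (1/5 : ℝ) 1 (by norm_num)
    intro k
    rw [Complex.dist_eq, ← neg_sub, norm_neg, one_mul]
    exact s_diff hbig k n
  choose t ht using fun n => cauchySeq_tendsto_of_complete (hcau n)
  have ht' : ∀ n, Tendsto (fun k => s b k n) atTop (𝓝 (t n)) := by
    intro n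
    exact (tendsto_add_atTop_iff_nat 1).mp (ht n)
  have tlb : ∀ n, 1 ≤ n → Real.sqrt 2 + 1 ≤ ‖t n‖ := by
    intro n hn
    exact ge_of_tendsto' ((continuous_norm.tendsto _).comp (ht' n))
      (fun k => s_lb hbig k n hn)
  have tne : ∀ n, t (n+1) ≠ 0 := by
    intro n h
    have := tlb (n+1) (by omega)
    rw [h] at this; simp at this; nlinarith [sq2nn]
  refine ⟨t, tlb, fun n => ?_⟩
  have h1 : Tendsto (fun k => b n + 1 / s b k (n+1)) atTop (𝓝 (b n + 1 / t (n+1))) := by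
    simp only [one_div]
    exact tendsto_const_nhds.add ((ht' (n+1)).inv₀ (tne n))
  exact tendsto_nhds_unique (ht n) h1

end VSeq2

namespace VSeq3
open VSeq

lemma gi_mul {a c : ℂ} (ha : IsGaussianInt a) (hc : IsGaussianInt c) : IsGaussianInt (a * c) := by
  obtain ⟨m, n, rfl⟩ := ha
  obtain ⟨p, q, rfl⟩ := hc
  refine ⟨m * p - n * q, m * q + n * p, ?_⟩
  push_cast
  have : (I:ℂ) * I = -1 := Complex.I_mul_I
  ring_nf
  rw [Complex.I_sq]
  ring

lemma gi_sub {a c : ℂ} (ha : IsGaussianInt a) (hc : IsGaussianInt c) : IsGaussianInt (a - c) := by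
  obtain ⟨m, n, rfl⟩ := ha
  obtain ⟨p, q, rfl⟩ := hc
  exact ⟨m - p, n - q, by push_cast; ring⟩

lemma gi_normSq {a : ℂ} (ha : IsGaussianInt a) (h0 : a ≠ 0) : 1 ≤ Complex.normSq a := by
  obtain ⟨m, n, rfl⟩ := ha
  have hre : ((m:ℂ) + n * I).re = m := by simp
  have him : ((m:ℂ) + n * I).im = n := by simp
  rw [Complex.normSq_apply, hre, him]
  have : ¬(m = 0 ∧ n = 0) := by
    rintro ⟨rfl, rfl⟩; simp at h0
  have h1 : (1:ℤ) ≤ m^2 + n^2 := by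
    rcases eq_or_ne m 0 with hm | hm
    · have hn : n ≠ 0 := by tauto
      have : 0 < n^2 := by positivity
      nlinarith [sq_nonneg m]
    · have : 0 < m^2 := by positivity
      nlinarith [sq_nonneg n]
  have h2 : (1:ℝ) ≤ (m:ℝ)^2 + (n:ℝ)^2 := by exact_mod_cast h1
  nlinarith [h2]

lemma near_shift {g : ℂ} (hg : IsGaussianInt g) (w : ℂ)
    (hre : |w.re| < 1/2) (him : |w.im| < 1/2) : nearGauss (g + w) = g := by
  obtain ⟨m, n, rfl⟩ := hg
  have h1 : ((m:ℂ) + n * I + w).re = (m:ℝ) + w.re := by simp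
  have h2 : ((m:ℂ) + n * I + w).im = (n:ℝ) + w.im := by simp
  rw [nearGauss, h1, h2]
  have e1 : (m:ℝ) + w.re + 1/2 = (w.re + 1/2) + m := by ring
  have e2 : (n:ℝ) + w.im + 1/2 = (w.im + 1/2) + n := by ring
  rw [e1, e2, Int.floor_add_intCast, Int.floor_add_intCast]
  have f1 : ⌊w.re + 1/2⌋ = 0 := by
    rw [Int.floor_eq_zero_iff]
    constructor
    · rw [abs_lt] at hre; linarith [hre.1]
    · rw [abs_lt] at hre; linarith [hre.2]
  have f2 : ⌊w.im + 1/2⌋ = 0 := by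
    rw [Int.floor_eq_zero_iff]
    constructor
    · rw [abs_lt] at him; linarith [him.1]
    · rw [abs_lt] at him; linarith [him.2]
  rw [f1, f2]
  push_cast
  ring

end VSeq3

/-- every sequence of Gaussian integers `(b_n)_{n≥0}` with `|b_n| ≥ √8`
for all `n ≥ 1` is the Hurwitz continued fraction of some complex irrational. -/
theorem valid_sequences (b : ℕ → ℂ) (hb : ∀ n, IsGaussianInt (b n))
    (hbig : ∀ n : ℕ, 1 ≤ n → Real.sqrt 8 ≤ ‖b n‖) :
    ∃ z : ℂ, ¬ IsGaussianRational z ∧ ∀ n : ℕ, hcfA z n = b n := by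
  obtain ⟨t, tlb, trec⟩ := VSeq2.exists_tail hbig
  have tne : ∀ n, t (n+1) ≠ 0 := by
    intro n h
    have := tlb (n+1) (by omega)
    rw [h] at this; simp at this; nlinarith [VSeq.sq2nn]
  have tdiff : ∀ n, ‖t n - b n‖ ≤ Real.sqrt 2 - 1 := by
    intro n
    have e : t n - b n = 1 / t (n+1) := by rw [trec n]; ring
    rw [e, norm_div, norm_one, ← VSeq.invR]
    exact one_div_le_one_div_of_le VSeq.Rpos (tlb (n+1) (by omega))
  have hnear : ∀ n, nearGauss (t n) = b n := by
    intro n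
    have h : t n = b n + (t n - b n) := by ring
    rw [h]
    have hlt : ‖t n - b n‖ < 1/2 :=
      lt_of_le_of_lt (tdiff n) (by nlinarith [VSeq.sq2lt])
    exact VSeq3.near_shift (hb n) _
      (lt_of_le_of_lt (Complex.abs_re_le_norm _) hlt)
      (lt_of_le_of_lt (Complex.abs_im_le_norm _) hlt)
  have hz : ∀ n, hcfZ (t 0) n = t n := by
    intro n
    induction n with
    | zero => rfl
    | succ n ih =>
      show 1 / (hcfZ (t 0) n - nearGauss (hcfZ (t 0) n)) = t (n+1)
      rw [ih, hnear n]
      have e : t n - b n = 1 / t (n+1) := by rw [trec n]; ring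
      rw [e, one_div_one_div]
  have ha : ∀ n, hcfA (t 0) n = b n := fun n => by rw [hcfA, hz n, hnear n]
  refine ⟨t 0, ?_, ha⟩
  rintro ⟨p, q, hp, hq, hq0, hpq⟩
  set d : ℕ → ℂ × ℂ := fun n => Nat.rec (p, q) (fun n pr => (pr.2, pr.1 - b n * pr.2)) n with hd
  have key : ∀ n, IsGaussianInt (d n).2 ∧ (d n).2 ≠ 0 ∧ t n = (d n).1 / (d n).2 ∧
      IsGaussianInt (d n).1 ∧ Complex.normSq (d n).2 ≤ (1/5:ℝ)^n * Complex.normSq q := by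
    intro n
    induction n with
    | zero => exact ⟨hq, hq0, hpq, hp, le_of_eq (by rw [pow_zero, one_mul]; rfl)⟩
    | succ n ih =>
      obtain ⟨hQg, hQ0, htn, hPg, hns⟩ := ih
      have hd1 : (d (n+1)).1 = (d n).2 := rfl
      have hd2 : (d (n+1)).2 = (d n).1 - b n * (d n).2 := rfl
      have hsub : t n - b n = 1 / t (n+1) := by rw [trec n]; ring
      have hsubne : t n - b n ≠ 0 := by rw [hsub]; exact one_div_ne_zero (tne n)
      have hP : (d n).1 = t n * (d n).2 := by rw [htn]; field_simp
      have hden : (d n).1 - b n * (d n).2 = (t n - b n) * (d n).2 := by rw [hP]; ring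
      have hne2 : (d (n+1)).2 ≠ 0 := by
        rw [hd2, hden]; exact mul_ne_zero hsubne hQ0
      have htn1 : t (n+1) = 1 / (t n - b n) := by rw [hsub, one_div_one_div]
      refine ⟨VSeq3.gi_sub hPg (VSeq3.gi_mul (hb n) hQg), hne2, ?_, hQg, ?_⟩
      · rw [hd1, hd2, hden, htn1]
        rw [eq_div_iff (by rw [← hden]; rw [hden]; exact mul_ne_zero hsubne hQ0)]
        field_simp
      · have hns1 : Complex.normSq (t n - b n) ≤ 1/5 := by
          rw [← Complex.sq_norm]
          nlinarith [tdiff n, VSeq.sq2, VSeq.sq2gt, norm_nonneg (t n - b n)]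
        have : Complex.normSq (d (n+1)).2 = Complex.normSq (t n - b n) * Complex.normSq (d n).2 := by
          rw [hd2, hden, map_mul]
        rw [this]
        calc Complex.normSq (t n - b n) * Complex.normSq (d n).2
            ≤ (1/5) * ((1/5:ℝ)^n * Complex.normSq q) :=
              mul_le_mul hns1 hns (Complex.normSq_nonneg _) (by norm_num)
          _ = (1/5:ℝ)^(n+1) * Complex.normSq q := by ring
  have hge : ∀ n, (1:ℝ) ≤ (1/5:ℝ)^n * Complex.normSq q := fun n =>
    le_trans (VSeq3.gi_normSq (key n).1 (key n).2.1) (key n).2.2.2.2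
  obtain ⟨n, hn⟩ := pow_unbounded_of_one_lt (Complex.normSq q) (by norm_num : (1:ℝ) < 5)
  have e : (1/5:ℝ)^n * 5^n = 1 := by rw [← mul_pow]; norm_num
  have hpow : (0:ℝ) < (1/5:ℝ)^n := by positivity
  nlinarith [hge n, hn, e, hpow]
end
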